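/- Let a₁, a₂, a₃ ∈ (0,1) with a₁ + a₂ < 1, and let A₆ = [[0, 1, 0], [a₁, a₂, 1], [1, 0, a₃]]. Then the symmetric game with payoff matrix A₆ has exactly one symmetric Nash equilibrium x in the standard simplex of ℝ³, and this x has all three coordinates strictly positive. -/

import Mathlib

/-- `x` is a symmetric Nash equilibrium of the symmetric game with payoff matrix `A`:
`x` lies in the standard simplex of `ℝ³` and `xᵀAx ≥ yᵀAx` for all `y` in the simplex. -/
def IsSymNash (A : Matrix (Fin 3) (Fin 3) ℝ) (x : Fin 3 → ℝ) : Prop :=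
  (∀ j, 0 ≤ x j) ∧ (∑ j, x j = 1) ∧
    ∀ y : Fin 3 → ℝ, (∀ j, 0 ≤ y j) → (∑ j, y j = 1) →
      dotProduct y (A.mulVec x) ≤ dotProduct x (A.mulVec x)

set_option maxHeartbeats 1000000 in
/-- The symmetric game with the given payoff matrix has exactly one symmetric Nash
equilibrium, and it is completely mixed. -/
theorem classA6_unique_completely_mixed (a₁ a₂ a₃ : ℝ)
    (h₁ : a₁ ∈ Set.Ioo (0:ℝ) 1) (h₂ : a₂ ∈ Set.Ioo (0:ℝ) 1) (h₃ : a₃ ∈ Set.Ioo (0:ℝ) 1)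
    (hsum : a₁ + a₂ < 1) :
    ∃ x : Fin 3 → ℝ, IsSymNash !![0, 1, 0; a₁, a₂, 1; 1, 0, a₃] x ∧ (∀ j, 0 < x j) ∧
      ∀ y : Fin 3 → ℝ, IsSymNash !![0, 1, 0; a₁, a₂, 1; 1, 0, a₃] y → y = x := by
  obtain ⟨ha1, ha1'⟩ := h₁
  obtain ⟨ha2, ha2'⟩ := h₂
  obtain ⟨ha3, ha3'⟩ := h₃
  have hn1 : 0 < 1 - a₃ + a₂ * a₃ := by nlinarith
  have hn2 : 0 < 1 - a₁ * a₃ := by nlinarith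
  have hn3 : 0 < 1 - a₁ - a₂ := by linarith
  set n1 : ℝ := 1 - a₃ + a₂ * a₃ with hn1def
  set n2 : ℝ := 1 - a₁ * a₃ with hn2def
  set n3 : ℝ := 1 - a₁ - a₂ with hn3def
  have hS : 0 < n1 + n2 + n3 := by linarith
  set S : ℝ := n1 + n2 + n3 with hSdef
  have hS' : S ≠ 0 := ne_of_gt hS
  refine ⟨![n1 / S, n2 / S, n3 / S], ⟨?_, ?_, ?_⟩, ?_, ?_⟩
  · intro j
    fin_cases j <;> simp <;> positivity
  · simp [Fin.sum_univ_three]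
    field_simp
    try rw [hSdef]
  · intro y hy0 hy1
    simp only [Fin.sum_univ_three] at hy1
    simp [Matrix.mulVec, dotProduct, Fin.sum_univ_three]
    have key : (a₁ * (n1 / S) + a₂ * (n2 / S) + n3 / S) = n2 / S := by
      field_simp; rw [hn1def, hn2def, hn3def]; ring
    have key2 : (n1 / S + a₃ * (n3 / S)) = n2 / S := by
      field_simp; rw [hn1def, hn2def, hn3def]; ring
    have hsum1 : n1 / S + n2 / S + n3 / S = 1 := by
      field_simp
      try rw [hSdef]
    rw [key, key2]
    apply le_of_eq
    linear_combination n2 / S * hy1 - n2 / S * hsum1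
  · intro j
    fin_cases j <;> simp <;> positivity
  · rintro y ⟨hy0, hy1, hy2⟩
    simp only [Fin.sum_univ_three] at hy1
    have e0 := hy2 ![1,0,0] (by intro j; fin_cases j <;> norm_num) (by simp [Fin.sum_univ_three])
    have e1 := hy2 ![0,1,0] (by intro j; fin_cases j <;> norm_num) (by simp [Fin.sum_univ_three])
    have e2 := hy2 ![0,0,1] (by intro j; fin_cases j <;> norm_num) (by simp [Fin.sum_univ_three])
    simp [Matrix.mulVec, dotProduct, Fin.sum_univ_three] at e0 e1 e2
    have h0 := hy0 0; have h1 := hy0 1; have h2 := hy0 2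
    have iden : y 0 * ((y 0 * y 1 + y 1 * (a₁ * y 0 + a₂ * y 1 + y 2) + y 2 * (y 0 + a₃ * y 2)) - y 1)
        + y 1 * ((y 0 * y 1 + y 1 * (a₁ * y 0 + a₂ * y 1 + y 2) + y 2 * (y 0 + a₃ * y 2)) - (a₁ * y 0 + a₂ * y 1 + y 2))
        + y 2 * ((y 0 * y 1 + y 1 * (a₁ * y 0 + a₂ * y 1 + y 2) + y 2 * (y 0 + a₃ * y 2)) - (y 0 + a₃ * y 2)) = 0 := by
      linear_combination (y 0 * y 1 + y 1 * (a₁ * y 0 + a₂ * y 1 + y 2) + y 2 * (y 0 + a₃ * y 2)) * hy1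
    set v : ℝ := y 0 * y 1 + y 1 * (a₁ * y 0 + a₂ * y 1 + y 2) + y 2 * (y 0 + a₃ * y 2) with hv
    have cs0 : y 0 * (v - y 1) = 0 := by
      linarith [mul_nonneg h0 (sub_nonneg.2 e0), mul_nonneg h1 (sub_nonneg.2 e1),
        mul_nonneg h2 (sub_nonneg.2 e2), iden]
    have cs1 : y 1 * (v - (a₁ * y 0 + a₂ * y 1 + y 2)) = 0 := by
      linarith [mul_nonneg h0 (sub_nonneg.2 e0), mul_nonneg h1 (sub_nonneg.2 e1),
        mul_nonneg h2 (sub_nonneg.2 e2), iden]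
    have cs2 : y 2 * (v - (y 0 + a₃ * y 2)) = 0 := by
      linarith [mul_nonneg h0 (sub_nonneg.2 e0), mul_nonneg h1 (sub_nonneg.2 e1),
        mul_nonneg h2 (sub_nonneg.2 e2), iden]
    -- y 1 > 0
    have hy1pos : 0 < y 1 := by
      rcases lt_or_eq_of_le h1 with h | h
      · exact h
      exfalso
      have h1' : y 1 = 0 := h.symm
      rcases lt_or_eq_of_le h0 with g | g
      · have hv0 : v = 0 := by
          rcases mul_eq_zero.mp cs0 with hh | hh
          · exact absurd hh (ne_of_gt g)
          · linarith
        rw [hv0, h1'] at e1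
        nlinarith [mul_pos ha1 g]
      · have g' : y 0 = 0 := g.symm
        have h2' : y 2 = 1 := by linarith
        rw [hv, g', h1', h2'] at e1
        nlinarith
    have hvq1 : v = a₁ * y 0 + a₂ * y 1 + y 2 := by
      rcases mul_eq_zero.mp cs1 with h | h
      · exact absurd h (ne_of_gt hy1pos)
      · linarith
    -- y 0 > 0
    have hy0pos : 0 < y 0 := by
      rcases lt_or_eq_of_le h0 with h | h
      · exact h
      exfalso
      have h0' : y 0 = 0 := h.symm
      rw [h0'] at hvq1
      have hy2pos : 0 < y 2 := by
        nlinarith [e0, hvq1, mul_pos (show (0:ℝ) < 1 - a₂ by linarith) hy1pos]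
      have hvq2 : v = y 0 + a₃ * y 2 := by
        rcases mul_eq_zero.mp cs2 with h | h
        · exact absurd h (ne_of_gt hy2pos)
        · linarith
      rw [h0'] at hvq2
      nlinarith [hvq1, hvq2, mul_pos ha2 hy1pos,
        mul_pos (show (0:ℝ) < 1 - a₃ by linarith) hy2pos]
    have hvq0 : v = y 1 := by
      rcases mul_eq_zero.mp cs0 with h | h
      · exact absurd h (ne_of_gt hy0pos)
      · linarith
    -- y 2 > 0
    have hy2pos : 0 < y 2 := by
      rcases lt_or_eq_of_le h2 with h | h
      · exact h
      exfalso
      have h2' : y 2 = 0 := h.symm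
      rw [h2'] at hvq1 e2
      nlinarith [hvq0, hvq1, e2, mul_nonneg ha1.le (show (0:ℝ) ≤ y 1 - y 0 by linarith),
        mul_pos (show (0:ℝ) < 1 - a₂ - a₁ by linarith) hy1pos]
    have hvq2 : v = y 0 + a₃ * y 2 := by
      rcases mul_eq_zero.mp cs2 with h | h
      · exact absurd h (ne_of_gt hy2pos)
      · linarith
    have E1 : y 1 = a₁ * y 0 + a₂ * y 1 + y 2 := by linarith [hvq0, hvq1]
    have E2 : y 1 = y 0 + a₃ * y 2 := by linarith [hvq0, hvq2]
    have D1 : y 1 * n3 = y 2 * n2 := by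
      rw [hn3def, hn2def]; linear_combination E1 - a₁ * E2
    have D0 : y 0 * n3 = y 2 * n1 := by
      rw [hn3def, hn1def]; linear_combination E1 - (1 - a₂) * E2
    have hy2val : y 2 = n3 / S := by
      have hkey : y 2 * S = n3 := by
        have h4 : (y 0 + y 1 + y 2) * n3 = y 2 * S := by rw [hSdef]; linear_combination D0 + D1
        rw [hy1] at h4; linarith
      field_simp
      linarith
    have hy0val : y 0 = n1 / S := by
      have h5 : y 0 * n3 = (n1 / S) * n3 := by
        rw [D0, hy2val]; ring
      exact mul_right_cancel₀ (ne_of_gt hn3) h5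
    have hy1val : y 1 = n2 / S := by
      have h5 : y 1 * n3 = (n2 / S) * n3 := by
        rw [D1, hy2val]; ring
      exact mul_right_cancel₀ (ne_of_gt hn3) h5
    funext j
    fin_cases j
    · simpa using hy0val
    · simpa using hy1val
    · simpa using hy2val
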